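/- Let 𝒰 be a union closed set on Ω_n and let A ⊆ Ω_n be a set that is larger (in the order <) than every non-empty set in 𝒰. Then 𝒰 ∪ {A} is closed under pairwise unions if and only if A ∪ B ∈ 𝒰 for every B ∈ red(𝒰). -/

import Mathlib

/-- Binary encoding of a subset `A ⊆ Ω_n = {1,…,n}` (modeled as `Finset (Fin n)`):
`b(A) = Σ_{i∈A} 2^(i-1)`. -/
def bcode {n : ℕ} (A : Finset (Fin n)) : ℕ := ∑ i ∈ A, 2 ^ (i : ℕ)

/-- The order on subsets of `Ω_n`: `A < B` iff `B` has fewer elements than `A`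
(sets with more elements are smaller), or they have the same number of elements
and `b(A) < b(B)`. -/
def setLT {n : ℕ} (A B : Finset (Fin n)) : Prop :=
  B.card < A.card ∨ (A.card = B.card ∧ bcode A < bcode B)

/-- A union closed set on `Ω_n`: a family of subsets of `Ω_n` closed under
pairwise unions that contains the full set `Ω_n` and the empty set. -/
def IsUCS {n : ℕ} (U : Finset (Finset (Fin n))) : Prop :=
  (∀ A ∈ U, ∀ B ∈ U, A ∪ B ∈ U) ∧ Finset.univ ∈ U ∧ ∅ ∈ U

/-- The reduced set of a union closed set `𝒰`: the non-empty members of `𝒰`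
that do not strictly contain another non-empty member of `𝒰`. -/
def redSet {n : ℕ} (U : Finset (Finset (Fin n))) : Finset (Finset (Fin n)) :=
  U.filter (fun A => A ≠ ∅ ∧ ∀ A₁ ∈ U, A₁ ≠ ∅ → ¬ A₁ ⊂ A)

lemma exists_red_subset {n : ℕ} (U : Finset (Finset (Fin n))) :
    ∀ Y, Y ∈ U → Y ≠ ∅ → ∃ B ∈ redSet U, B ⊆ Y := by
  intro Y
  induction Y using Finset.strongInduction with
  | _ Y ih =>
    intro hY hne
    by_cases h : ∀ A₁ ∈ U, A₁ ≠ ∅ → ¬ A₁ ⊂ Y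
    · exact ⟨Y, Finset.mem_filter.2 ⟨hY, hne, h⟩, subset_rfl⟩
    · push_neg at h
      obtain ⟨Z, hZU, hZne, hZY⟩ := h
      obtain ⟨B, hB, hBZ⟩ := ih Z hZY hZU hZne.ne_empty
      exact ⟨B, hB, hBZ.trans hZY.subset⟩

/-- If `𝒰` is a union closed set and `A ⊆ Ω_n` is larger (in the order `<`) than
every non-empty set in `𝒰`, then `𝒰 ∪ {A}` is closed under pairwise unions if and
only if `A ∪ B ∈ 𝒰` for every `B ∈ red(𝒰)`. -/
theorem insert_unionClosed_iff_red {n : ℕ} (U : Finset (Finset (Fin n))) (hU : IsUCS U)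
    (A : Finset (Fin n)) (hlarger : ∀ B ∈ U, B ≠ ∅ → setLT B A) :
    (∀ X ∈ insert A U, ∀ Y ∈ insert A U, X ∪ Y ∈ insert A U) ↔
      (∀ B ∈ redSet U, A ∪ B ∈ U) := by
  obtain ⟨hclosed, -, hemp⟩ := hU
  have hnotsub : ∀ B ∈ U, B ≠ ∅ → ¬ B ⊆ A := by
    intro B hB hne hsub
    rcases hlarger B hB hne with h | ⟨hc, hb⟩
    · exact absurd (Finset.card_le_card hsub) (not_le.2 h)
    · have : B = A := Finset.eq_of_subset_of_card_le hsub (le_of_eq hc.symm)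
      subst this; exact lt_irrefl _ hb
  constructor
  · intro hcl B hB
    have hBU : B ∈ U := (Finset.mem_filter.1 hB).1
    have hBne : B ≠ ∅ := (Finset.mem_filter.1 hB).2.1
    have := hcl A (Finset.mem_insert_self _ _) B (Finset.mem_insert_of_mem hBU)
    rcases Finset.mem_insert.1 this with h | h
    · exfalso
      exact hnotsub B hBU hBne (by rw [← h]; exact Finset.subset_union_right)
    · exact h
  · intro hred X hX Y hY
    have key : ∀ Y ∈ U, A ∪ Y ∈ insert A U := by
      intro Y hYU
      by_cases hYne : Y = ∅
      · subst hYne; simp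
      · obtain ⟨B, hB, hBY⟩ := exists_red_subset U Y hYU hYne
        have h1 : A ∪ B ∈ U := hred B hB
        have h2 : (A ∪ B) ∪ Y ∈ U := hclosed _ h1 _ hYU
        have : (A ∪ B) ∪ Y = A ∪ Y := by
          rw [Finset.union_assoc, Finset.union_eq_right.2 hBY]
        rw [this] at h2
        exact Finset.mem_insert_of_mem h2
    rcases Finset.mem_insert.1 hX with hX | hX <;> rcases Finset.mem_insert.1 hY with hY | hY
    · rw [hX, hY]; simp
    · rw [hX]; exact key Y hY
    · rw [hY, Finset.union_comm]; exact key X hX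
    · exact Finset.mem_insert_of_mem (hclosed _ hX _ hY)
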